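/- Let r_0 > 0, x_c(t) = r_0 sinh(t), r(t) = r_0 cosh(t). Then the circle C_t = {(x,y) : (x - x_c(t))^2 + y^2 = r(t)^2} is the evolution of the circle of radius r_0 centered at the origin under normal speed F(x,y) = x: for each point (x,y) ∈ C_t, the normal velocity of C_t at (x,y) equals x. Concretely, the curve γ(θ,t) = (x_c(t) + r(t)cos θ, r(t) sin θ) satisfies ∂_t γ · n = F(γ), where n = (cos θ, sin θ) is the outward unit normal. -/

import Mathlib

/-- the circle of radius r(t) = r₀cosh t centered at (x_c(t),0) with
x_c(t) = r₀sinh t evolves with normal speed F(x,y) = x: the parametrization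
γ(θ,t) = (x_c(t) + r(t)cos θ, r(t)sin θ) satisfies ∂ₜγ·n = F(γ) with
n = (cos θ, sin θ). -/
theorem circle_normal_speed_x (r0 : ℝ) (hr0 : 0 < r0)
    (xc r : ℝ → ℝ)
    (hxc : ∀ t, xc t = r0 * Real.sinh t) (hr : ∀ t, r t = r0 * Real.cosh t)
    (θ t : ℝ) :
    deriv (fun s => xc s + r s * Real.cos θ) t * Real.cos θ
      + deriv (fun s => r s * Real.sin θ) t * Real.sin θ
      = xc t + r t * Real.cos θ := by
  have h1 : (fun s => xc s + r s * Real.cos θ)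
      = fun s => r0 * Real.sinh s + r0 * Real.cosh s * Real.cos θ := by
    funext s; rw [hxc, hr]
  have h2 : (fun s => r s * Real.sin θ)
      = fun s => r0 * Real.cosh s * Real.sin θ := by
    funext s; rw [hr]
  rw [h1, h2, hxc, hr]
  have d1 : deriv (fun s => r0 * Real.sinh s + r0 * Real.cosh s * Real.cos θ) t
      = r0 * Real.cosh t + r0 * Real.sinh t * Real.cos θ := by
    have := ((Real.hasDerivAt_sinh t).const_mul r0).add
      (((Real.hasDerivAt_cosh t).const_mul r0).mul_const (Real.cos θ))
    exact this.deriv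
  have d2 : deriv (fun s => r0 * Real.cosh s * Real.sin θ) t
      = r0 * Real.sinh t * Real.sin θ := by
    have := ((Real.hasDerivAt_cosh t).const_mul r0).mul_const (Real.sin θ)
    simpa using this.deriv
  rw [d1, d2]
  linear_combination r0 * Real.sinh t * Real.sin_sq_add_cos_sq θ
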